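/- For every x ∈ ℝ^d there exists a unique curve γ_x : [0,∞) → ℝ^d with γ_x(0) = x and γ_x′(t) = ∇f(γ_x(t)) for all t ≥ 0, and γ_x(t) converges as t → ∞ to a critical point of f, i.e., there exists x∞ ∈ ℝ^d with ∇f(x∞) = 0 and lim_{t→∞} γ_x(t) = x∞. -/

import Mathlib

open Metric Set Filter MeasureTheory Topology
open scoped Topology RealInnerProductSpace

abbrev Euc (d : ℕ) := EuclideanSpace ℝ (Fin d)

/-- The Hessian of `f`, as the derivative of the gradient field. -/
noncomputable def hess {d : ℕ} (f : Euc d → ℝ) (x : Euc d) : Euc d →L[ℝ] Euc d :=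
  fderiv ℝ (gradient f) x

/-- The standing assumptions on the density `f`: nonnegative, integrable, vanishing at
infinity, twice differentiable with bounded and uniformly continuous zeroth, first and
second derivatives, and Morse (nonsingular Hessian at every critical point). -/
def IsNiceDensity {d : ℕ} (f : Euc d → ℝ) : Prop :=
  (∀ x, 0 ≤ f x) ∧
  Integrable f volume ∧
  Tendsto f (cocompact (Euc d)) (𝓝 0) ∧
  Differentiable ℝ f ∧
  Differentiable ℝ (gradient f) ∧
  (∃ M, ∀ x, |f x| ≤ M) ∧
  (∃ M, ∀ x, ‖gradient f x‖ ≤ M) ∧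
  (∃ M, ∀ x, ‖hess f x‖ ≤ M) ∧
  UniformContinuous f ∧
  UniformContinuous (gradient f) ∧
  UniformContinuous (hess f) ∧
  (∀ x, gradient f x = 0 → Function.Bijective (hess f x))

/-- `γ` is the gradient ascent curve of `f` starting at `x`, defined on `[0, ∞)`. -/
def IsGradFlow {d : ℕ} (f : Euc d → ℝ) (x : Euc d) (γ : ℝ → Euc d) : Prop :=
  γ 0 = x ∧ ∀ t ∈ Ici (0:ℝ), HasDerivWithinAt γ (gradient f (γ t)) (Ici 0) t

section Flow

variable {d : ℕ}

/-- Existence of a global forward flow for a bounded Lipschitz vector field. -/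
theorem exists_global_flow (g : Euc d → Euc d) (L : NNReal) (hg : LipschitzWith L g)
    (M : ℝ) (hM : ∀ y, ‖g y‖ ≤ M) (x : Euc d) :
    ∃ γ : ℝ → Euc d, γ 0 = x ∧ ∀ t ∈ Ici (0:ℝ), HasDerivWithinAt γ (g (γ t)) (Ici 0) t := by
  have hM0 : 0 ≤ M := le_trans (norm_nonneg _) (hM x)
  -- solutions on [0, n] for each n
  have hsol : ∀ n : ℕ, ∃ F : ℝ → Euc d, F 0 = x ∧
      ∀ t ∈ Icc (0:ℝ) n, HasDerivWithinAt F (g (F t)) (Icc (0:ℝ) n) t := by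
    intro n
    have hpl : IsPicardLindelof (fun _ : ℝ => g) (tmin := 0) (tmax := (n:ℝ))
        ⟨0, le_rfl, Nat.cast_nonneg n⟩ x (M * n).toNNReal 0 M.toNNReal L :=
      IsPicardLindelof.of_time_independent
        (fun y _ => by simpa [Real.coe_toNNReal _ hM0] using hM y) hg.lipschitzOnWith
        (by simp [Real.coe_toNNReal _ hM0, Real.coe_toNNReal _ (mul_nonneg hM0 (Nat.cast_nonneg n))])
    obtain ⟨F, hF0, hF⟩ := hpl.exists_eq_forall_mem_Icc_hasDerivWithinAt₀
    exact ⟨F, hF0, hF⟩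
  choose F hF0 hF using hsol
  -- localization helper
  have hloc : ∀ (n : ℕ) (G : ℝ → Euc d), (∀ t ∈ Icc (0:ℝ) n, HasDerivWithinAt G (g (G t))
      (Icc (0:ℝ) n) t) → ∀ t ∈ Ico (0:ℝ) n, HasDerivWithinAt G (g (G t)) (Ici t) t := by
    intro n G hG t ht
    have h1 : HasDerivWithinAt G (g (G t)) (Icc (0:ℝ) n) t := hG t ⟨ht.1, ht.2.le⟩
    refine h1.mono_of_mem_nhdsWithin ?_
    rw [mem_nhdsWithin]
    exact ⟨Iio n, isOpen_Iio, ht.2, fun s hs => ⟨le_trans ht.1 hs.2, hs.1.le⟩⟩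
  -- agreement on common domain
  have hagree : ∀ m n : ℕ, m ≤ n → EqOn (F m) (F n) (Icc (0:ℝ) m) := by
    intro m n hmn
    have hsub : Icc (0:ℝ) m ⊆ Icc (0:ℝ) n := Icc_subset_Icc_right (by exact_mod_cast hmn)
    refine ODE_solution_unique (v := fun _ : ℝ => g) (K := L) (fun _ => hg) ?_ ?_ ?_ ?_ ?_
    · exact fun s hs => ((hF m) s hs).continuousWithinAt
    · exact hloc m (F m) (hF m)
    · exact fun s hs => (((hF n) s (hsub hs)).mono hsub).continuousWithinAt
    · exact hloc m (F n) (fun s hs => ((hF n) s (hsub hs)).mono hsub)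
    · rw [hF0 m, hF0 n]
  refine ⟨fun t => F (⌈t⌉₊ + 1) t, by simpa using hF0 1, ?_⟩
  intro t ht
  set n : ℕ := ⌈t⌉₊ + 1 with hn
  have htn : t < n := by
    calc t ≤ ⌈t⌉₊ := Nat.le_ceil t
    _ < n := by exact_mod_cast Nat.lt_succ_self _
  have hEq : EqOn (fun s => F (⌈s⌉₊ + 1) s) (F n) (Icc (0:ℝ) n) := by
    intro s hs
    rcases le_total (⌈s⌉₊ + 1) n with h | h
    · exact hagree _ n h ⟨hs.1, le_trans (Nat.le_ceil s) (by exact_mod_cast Nat.le_succ _)⟩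
    · exact (hagree n _ h hs).symm
  have h1 : HasDerivWithinAt (F n) (g (F n t)) (Icc (0:ℝ) n) t := hF n t ⟨ht, htn.le⟩
  have h2 : HasDerivWithinAt (fun s => F (⌈s⌉₊ + 1) s) (g (F n t)) (Icc (0:ℝ) n) t :=
    h1.congr hEq (hEq ⟨ht, htn.le⟩)
  have h3 : (fun s => F (⌈s⌉₊ + 1) s) t = F n t := hEq ⟨ht, htn.le⟩
  rw [← h3] at h2
  refine h2.mono_of_mem_nhdsWithin ?_
  rw [mem_nhdsWithin]
  exact ⟨Iio n, isOpen_Iio, htn, fun s hs => ⟨hs.2, hs.1.le⟩⟩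

/-- Uniqueness of the forward flow. -/
theorem flow_unique (g : Euc d → Euc d) (L : NNReal) (hg : LipschitzWith L g)
    {γ γ' : ℝ → Euc d}
    (h : ∀ t ∈ Ici (0:ℝ), HasDerivWithinAt γ (g (γ t)) (Ici 0) t)
    (h' : ∀ t ∈ Ici (0:ℝ), HasDerivWithinAt γ' (g (γ' t)) (Ici 0) t)
    (h0 : γ 0 = γ' 0) : EqOn γ γ' (Ici 0) := by
  intro t ht
  have key : EqOn γ γ' (Icc (0:ℝ) t) := by
    refine ODE_solution_unique (v := fun _ : ℝ => g) (K := L) (fun _ => hg) ?_ ?_ ?_ ?_ h0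
    · exact fun s hs => ((h s hs.1).continuousWithinAt).mono (fun u hu => hu.1)
    · exact fun s hs => (h s hs.1).mono (fun u hu => le_trans hs.1 hu)
    · exact fun s hs => ((h' s hs.1).continuousWithinAt).mono (fun u hu => hu.1)
    · exact fun s hs => (h' s hs.1).mono (fun u hu => le_trans hs.1 hu)
  exact key ⟨ht, le_rfl⟩

end Flow

section FlowCalc

variable {d : ℕ} {f : Euc d → ℝ} {γ : ℝ → Euc d}

/-- Derivative of `f` along the flow. -/
theorem flow_deriv_f (hdiff : Differentiable ℝ f)
    (h : ∀ t ∈ Ici (0:ℝ), HasDerivWithinAt γ (gradient f (γ t)) (Ici 0) t)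
    {t : ℝ} (ht : t ∈ Ici (0:ℝ)) :
    HasDerivWithinAt (fun s => f (γ s)) (‖gradient f (γ t)‖ ^ 2) (Ici 0) t := by
  have hG : HasGradientAt f (gradient f (γ t)) (γ t) := (hdiff (γ t)).hasGradientAt
  have hfd : HasFDerivAt f (InnerProductSpace.toDual ℝ (Euc d) (gradient f (γ t))) (γ t) :=
    hG.hasFDerivAt
  have h2 := hfd.comp_hasDerivWithinAt t (h t ht)
  rw [InnerProductSpace.toDual_apply_apply, real_inner_self_eq_norm_sq] at h2
  exact h2

/-- Lower bound on increments of `f` along the flow. -/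
theorem flow_f_increment (hdiff : Differentiable ℝ f)
    (h : ∀ t ∈ Ici (0:ℝ), HasDerivWithinAt γ (gradient f (γ t)) (Ici 0) t)
    {a b C : ℝ} (ha : 0 ≤ a) (hab : a ≤ b)
    (hC : ∀ s ∈ Icc a b, C ≤ ‖gradient f (γ s)‖ ^ 2) :
    C * (b - a) ≤ f (γ b) - f (γ a) := by
  have hsub : Icc a b ⊆ Ici (0:ℝ) := fun s hs => le_trans ha hs.1
  have hderiv : ∀ s ∈ Ioo a b, HasDerivAt (fun u => f (γ u)) (‖gradient f (γ s)‖ ^ 2) s := by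
    intro s hs
    have h0 : (0:ℝ) < s := lt_of_le_of_lt ha hs.1
    exact (flow_deriv_f hdiff h (le_of_lt h0)).hasDerivAt (Ici_mem_nhds h0)
  refine Convex.mul_sub_le_image_sub_of_le_deriv (f := fun u => f (γ u)) (C := C) (convex_Icc a b) ?_ ?_ ?_ a ⟨le_rfl, hab⟩
    b ⟨hab, le_rfl⟩ hab
  · exact fun s hs => ((flow_deriv_f hdiff h (hsub hs)).continuousWithinAt).mono hsub
  · intro s hs
    rw [interior_Icc] at hs
    exact ((hderiv s hs).differentiableAt).differentiableWithinAt
  · intro s hs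
    rw [interior_Icc] at hs
    rw [(hderiv s hs).deriv]
    exact hC s (Ioo_subset_Icc_self hs)

/-- `f` is monotone along the flow. -/
theorem flow_f_mono (hdiff : Differentiable ℝ f)
    (h : ∀ t ∈ Ici (0:ℝ), HasDerivWithinAt γ (gradient f (γ t)) (Ici 0) t)
    {a b : ℝ} (ha : 0 ≤ a) (hab : a ≤ b) : f (γ a) ≤ f (γ b) := by
  have := flow_f_increment hdiff h ha hab (C := 0) (fun s _ => by positivity)
  linarith

/-- The flow moves at speed at most `M`. -/
theorem flow_dist_le (h : ∀ t ∈ Ici (0:ℝ), HasDerivWithinAt γ (gradient f (γ t)) (Ici 0) t)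
    {M : ℝ} (hM : ∀ y, ‖gradient f y‖ ≤ M) {a b : ℝ} (ha : 0 ≤ a) (hab : a ≤ b) :
    ‖γ b - γ a‖ ≤ M * (b - a) := by
  have := Convex.norm_image_sub_le_of_norm_hasDerivWithin_le
    (f := γ) (f' := fun s => gradient f (γ s)) (C := M) (s := Ici (0:ℝ))
    (fun s hs => h s hs) (fun s _ => hM _) (convex_Ici 0) ha (le_trans ha hab)
  calc ‖γ b - γ a‖ ≤ M * ‖b - a‖ := this
  _ = M * (b - a) := by rw [Real.norm_eq_abs, abs_of_nonneg (by linarith)]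

/-- The gradient norm along the flow tends to zero. -/
theorem flow_grad_tendsto_zero (hdiff : Differentiable ℝ f)
    (h : ∀ t ∈ Ici (0:ℝ), HasDerivWithinAt γ (gradient f (γ t)) (Ici 0) t)
    {L : NNReal} (hLip : LipschitzWith L (gradient f))
    {M : ℝ} (hM : ∀ y, ‖gradient f y‖ ≤ M)
    {B : ℝ} (hB : ∀ y, |f y| ≤ B) :
    Tendsto (fun t => ‖gradient f (γ t)‖) atTop (𝓝 0) := by
  by_contra hcon
  rw [Metric.tendsto_atTop] at hcon
  push_neg at hcon
  obtain ⟨ε, hε, hfreq⟩ := hcon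
  have hfreq' : ∀ N : ℝ, ∃ t ≥ N, ε ≤ ‖gradient f (γ t)‖ := by
    intro N
    obtain ⟨t, htN, ht⟩ := hfreq N
    refine ⟨t, htN, ?_⟩
    rw [Real.dist_eq, sub_zero, abs_of_nonneg (norm_nonneg _)] at ht
    exact ht
  have hM0 : 0 ≤ M := le_trans (norm_nonneg _) (hM (γ 0))
  set δ : ℝ := ε / (2 * (L * M + 1)) with hδdef
  have hLM1 : (0:ℝ) < L * M + 1 := by positivity
  have hδ : 0 < δ := by positivity
  set a : ℝ := (ε / 2) ^ 2 * δ with hadef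
  have ha : 0 < a := by positivity
  -- key increment estimate
  have hkey : ∀ t : ℝ, 0 ≤ t → ε ≤ ‖gradient f (γ t)‖ →
      a ≤ f (γ (t + δ)) - f (γ t) := by
    intro t ht hεt
    have hstep : ∀ s ∈ Icc t (t + δ), (ε / 2) ^ 2 ≤ ‖gradient f (γ s)‖ ^ 2 := by
      intro s hs
      have hdist : ‖γ s - γ t‖ ≤ M * (s - t) := flow_dist_le h hM ht hs.1
      have hgg : ‖gradient f (γ s) - gradient f (γ t)‖ ≤ L * (M * (s - t)) := by
        calc ‖gradient f (γ s) - gradient f (γ t)‖ ≤ L * ‖γ s - γ t‖ := by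
              simpa [dist_eq_norm] using hLip.dist_le_mul (γ s) (γ t)
        _ ≤ L * (M * (s - t)) := by
              exact mul_le_mul_of_nonneg_left hdist (by positivity)
      have hLMst : L * (M * (s - t)) ≤ ε / 2 := by
        have h1 : (L : ℝ) * M * (s - t) ≤ (L * M + 1) * δ := by
          have hst : s - t ≤ δ := by linarith [hs.2]
          have h2 : (L:ℝ) * M * (s - t) ≤ (L:ℝ) * M * δ :=
            mul_le_mul_of_nonneg_left hst (by positivity)
          nlinarith [hδ.le]
        have h3 : (L * M + 1) * δ = ε / 2 := by
          rw [hδdef]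
          field_simp
        nlinarith
      have : ε / 2 ≤ ‖gradient f (γ s)‖ := by
        have := norm_sub_norm_le (gradient f (γ t)) (gradient f (γ s))
        rw [norm_sub_rev] at hgg
        nlinarith
      nlinarith [norm_nonneg (gradient f (γ s))]
    have := flow_f_increment hdiff h ht (by linarith) hstep
    calc a = (ε / 2) ^ 2 * ((t + δ) - t) := by rw [hadef]; ring_nf
    _ ≤ f (γ (t + δ)) - f (γ t) := this
  -- iterate to get unbounded growth
  have hgrow : ∀ n : ℕ, ∃ t : ℝ, 0 ≤ t ∧ f (γ 0) + n * a ≤ f (γ t) := by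
    intro n
    induction n with
    | zero => exact ⟨0, le_rfl, by simp⟩
    | succ n ih =>
      obtain ⟨t, ht0, ht⟩ := ih
      obtain ⟨t', ht't, hεt'⟩ := hfreq' t
      have ht'0 : 0 ≤ t' := le_trans ht0 ht't
      refine ⟨t' + δ, by linarith, ?_⟩
      have h1 : a ≤ f (γ (t' + δ)) - f (γ t') := hkey t' ht'0 hεt'
      have h2 : f (γ t) ≤ f (γ t') := flow_f_mono hdiff h ht0 ht't
      push_cast
      linarith
  obtain ⟨n, hn⟩ := exists_nat_gt ((B - f (γ 0)) / a)
  obtain ⟨t, ht0, ht⟩ := hgrow n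
  have h1 : f (γ t) ≤ B := le_trans (le_abs_self _) (hB _)
  have h2 : (B - f (γ 0)) / a < n := hn
  rw [div_lt_iff₀ ha] at h2
  linarith

end FlowCalc

section Crit

variable {d : ℕ} {f : Euc d → ℝ}

/-- A nondegenerate critical point is an isolated zero of the gradient. -/
theorem isolated_zero (hdg : Differentiable ℝ (gradient f))
    (hc2 : Continuous (hess f)) {c : Euc d} (hc : gradient f c = 0)
    (hb : Function.Bijective (hess f c)) :
    ∀ᶠ z in 𝓝[≠] c, gradient f z ≠ 0 := by
  have hcd : ContDiff ℝ 1 (gradient f) := contDiff_one_iff_fderiv.mpr ⟨hdg, hc2⟩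
  have hstrict0 : HasStrictFDerivAt (gradient f) (fderiv ℝ (gradient f) c) c :=
    hcd.contDiffAt.hasStrictFDerivAt one_ne_zero
  have hb' : Function.Bijective ((hess f c : Euc d →ₗ[ℝ] Euc d) : Euc d → Euc d) := hb
  let e : Euc d ≃L[ℝ] Euc d :=
    (LinearEquiv.ofBijective (hess f c : Euc d →ₗ[ℝ] Euc d) hb').toContinuousLinearEquiv
  have he : (e : Euc d →L[ℝ] Euc d) = hess f c := by ext v; rfl
  have hstrict : HasStrictFDerivAt (gradient f) (e : Euc d →L[ℝ] Euc d) c := by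
    rw [he]; exact hstrict0
  set P := hstrict.toOpenPartialHomeomorph (gradient f) with hP
  have hsrc : c ∈ P.source := hstrict.mem_toOpenPartialHomeomorph_source
  have hinj : InjOn (gradient f) P.source := by
    have := P.injOn
    rwa [hstrict.toOpenPartialHomeomorph_coe] at this
  have hmem : ∀ᶠ z in 𝓝 c, z ∈ P.source := P.open_source.mem_nhds hsrc
  filter_upwards [hmem.filter_mono nhdsWithin_le_nhds, self_mem_nhdsWithin] with z hz hne h0
  exact hne (hinj hz hsrc (by rw [h0, hc]))

/-- Superlevel sets at positive levels are compact. -/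
theorem isCompact_superlevel (hfc : Continuous f)
    (h0 : Tendsto f (cocompact (Euc d)) (𝓝 0)) {c : ℝ} (hc : 0 < c) :
    IsCompact {y : Euc d | c ≤ f y} := by
  have hmem : f ⁻¹' (Iio c) ∈ cocompact (Euc d) := h0 (Iio_mem_nhds hc)
  rw [hasBasis_cocompact.mem_iff] at hmem
  obtain ⟨K, hK, hsub⟩ := hmem
  have hcl : IsClosed {y : Euc d | c ≤ f y} := isClosed_le continuous_const hfc
  refine hK.of_isClosed_subset hcl ?_
  intro y hy
  by_contra hyK
  exact absurd (hsub hyK) (by simp [mem_preimage]; exact hy)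

/-- The set of critical points in a compact set is finite under the Morse condition. -/
theorem finite_crit {K : Set (Euc d)} (hK : IsCompact K)
    (hdg : Differentiable ℝ (gradient f)) (hc2 : Continuous (hess f))
    (hmorse : ∀ y, gradient f y = 0 → Function.Bijective (hess f y)) :
    Set.Finite (K ∩ (gradient f) ⁻¹' {0}) := by
  set Z := K ∩ (gradient f) ⁻¹' {0} with hZ
  have hZc : IsCompact Z := hK.inter_right (isClosed_singleton.preimage hdg.continuous)
  refine hZc.finite ?_
  rw [isDiscrete_iff_nhdsNE]
  intro c hcZ
  have hiso : ∀ᶠ z in 𝓝[≠] c, gradient f z ≠ 0 :=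
    isolated_zero hdg hc2 hcZ.2 (hmorse c hcZ.2)
  rw [← Filter.empty_mem_iff_bot]
  have h1 : {z | gradient f z ≠ 0} ∈ 𝓝[≠] c ⊓ 𝓟 Z := mem_inf_of_left hiso
  have h2 : Z ∈ 𝓝[≠] c ⊓ 𝓟 Z := mem_inf_of_right (mem_principal_self Z)
  have h3 : {z | gradient f z ≠ 0} ∩ Z = ∅ := by
    ext z; simp only [mem_inter_iff, mem_empty_iff_false, iff_false, not_and]
    intro hz hzZ; exact hz hzZ.2
  have := Filter.inter_mem h1 h2
  rwa [h3] at this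

/-- Positive separation between points of a finite set. -/
theorem exists_sep {Z : Set (Euc d)} (hZ : Z.Finite) :
    ∃ δ : ℝ, 0 < δ ∧ ∀ c ∈ Z, ∀ c' ∈ Z, c ≠ c' → δ ≤ dist c c' := by
  set P : Set (Euc d × Euc d) := (Z ×ˢ Z) ∩ {p | p.1 ≠ p.2} with hP
  have hPfin : P.Finite := (hZ.prod hZ).subset inter_subset_left
  rcases P.eq_empty_or_nonempty with hPe | hPne
  · refine ⟨1, one_pos, fun c hc c' hc' hne =>
      absurd (show (c, c') ∈ P from ⟨⟨hc, hc'⟩, hne⟩) (by rw [hPe]; exact notMem_empty _)⟩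
  · obtain ⟨p, hp, hmin⟩ := Set.exists_min_image P (fun p => dist p.1 p.2) hPfin hPne
    exact ⟨dist p.1 p.2, dist_pos.mpr hp.2, fun c hc c' hc' hne =>
      hmin (c, c') ⟨⟨hc, hc'⟩, hne⟩⟩

end Crit

section Conv

variable {d : ℕ} {f : Euc d → ℝ} {γ : ℝ → Euc d}

-- the convergence theorem
theorem flow_converges (hdiff : Differentiable ℝ f)
    (hdg : Differentiable ℝ (gradient f)) (hc2 : Continuous (hess f))
    (htend : Tendsto f (cocompact (Euc d)) (𝓝 0))
    {L : NNReal} (hLip : LipschitzWith L (gradient f))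
    {M B : ℝ} (hM : ∀ y, ‖gradient f y‖ ≤ M) (hB : ∀ y, |f y| ≤ B)
    (hmorse : ∀ y, gradient f y = 0 → Function.Bijective (hess f y))
    (hflow : ∀ t ∈ Ici (0:ℝ), HasDerivWithinAt γ (gradient f (γ t)) (Ici 0) t)
    (hpos : 0 < f (γ 0)) :
    ∃ xlim : Euc d, gradient f xlim = 0 ∧ Tendsto γ atTop (𝓝 xlim) := by
  set K : Set (Euc d) := {y | f (γ 0) ≤ f y} with hKdef
  have hKc : IsCompact K := isCompact_superlevel hdiff.continuous htend hpos
  have hγK : ∀ t : ℝ, 0 ≤ t → γ t ∈ K := fun t ht => flow_f_mono hdiff hflow le_rfl ht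
  set Z : Set (Euc d) := K ∩ (gradient f) ⁻¹' {0} with hZdef
  have hZfin : Z.Finite := finite_crit hKc hdg hc2 hmorse
  obtain ⟨δ, hδ, hsep⟩ := exists_sep hZfin
  have hg0 : Tendsto (fun t => ‖gradient f (γ t)‖) atTop (𝓝 0) :=
    flow_grad_tendsto_zero hdiff hflow hLip hM hB
  have hγcont : ContinuousOn γ (Ici 0) := fun t ht => (hflow t ht).continuousWithinAt
  -- key claim: eventually the flow is trapped in one small ball around a critical point
  have key : ∀ ε : ℝ, 0 < ε → 2 * ε ≤ δ → ∃ c ∈ Z, ∀ᶠ t in atTop, γ t ∈ ball c ε := by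
    intro ε hε hεδ
    have hUopen : IsOpen (⋃ c ∈ Z, ball c ε) := isOpen_biUnion fun _ _ => isOpen_ball
    have henter : ∃ T : ℝ, 0 ≤ T ∧ ∀ t, T ≤ t → γ t ∈ ⋃ c ∈ Z, ball c ε := by
      set W := K \ ⋃ c ∈ Z, ball c ε with hW
      rcases W.eq_empty_or_nonempty with hWe | hWne
      · refine ⟨0, le_rfl, fun t ht => ?_⟩
        by_contra hnot
        have : γ t ∈ W := ⟨hγK t ht, hnot⟩
        rw [hWe] at this
        exact notMem_empty _ this
      · have hWc : IsCompact W := hKc.diff hUopen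
        obtain ⟨w, hwW, hwmin⟩ := hWc.exists_isMinOn hWne
          ((continuous_norm.comp hdg.continuous).continuousOn)
        have hw0 : gradient f w ≠ 0 := by
          intro h0
          exact hwW.2 (mem_biUnion ⟨hwW.1, by simp [h0]⟩ (mem_ball_self hε))
        have hη : 0 < ‖gradient f w‖ := norm_pos_iff.mpr hw0
        have hev : ∀ᶠ t in atTop, ‖gradient f (γ t)‖ < ‖gradient f w‖ :=
          hg0.eventually_lt_const hη
        obtain ⟨T, hT⟩ := eventually_atTop.mp hev
        refine ⟨max T 0, le_max_right _ _, fun t ht => ?_⟩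
        have ht0 : 0 ≤ t := le_trans (le_max_right T 0) ht
        by_contra hnot
        have hWt : γ t ∈ W := ⟨hγK t ht0, hnot⟩
        have h1 : ‖gradient f w‖ ≤ ‖gradient f (γ t)‖ := hwmin hWt
        have h2 := hT t (le_trans (le_max_left T 0) ht)
        linarith
    obtain ⟨T, hT0, hT⟩ := henter
    have hTmem : γ T ∈ ⋃ c ∈ Z, ball c ε := hT T le_rfl
    rw [mem_iUnion₂] at hTmem
    obtain ⟨c, hcZ, hcball⟩ := hTmem
    refine ⟨c, hcZ, ?_⟩
    set v : Set (Euc d) := ⋃ c' ∈ Z \ {c}, ball c' ε with hv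
    have hvopen : IsOpen v := isOpen_biUnion fun _ _ => isOpen_ball
    have hdisj : Disjoint (ball c ε) v := by
      rw [Set.disjoint_left]
      intro y hyu hyv
      rw [mem_iUnion₂] at hyv
      obtain ⟨c', hc', hyc'⟩ := hyv
      have hne : c ≠ c' := fun h => hc'.2 (by rw [← h]; rfl)
      have := hsep c hcZ c' hc'.1 hne
      have hd : dist c c' ≤ dist c y + dist y c' := dist_triangle c y c'
      rw [dist_comm c y] at hd
      have h1 : dist y c < ε := mem_ball.mp hyu
      have h2 : dist y c' < ε := mem_ball.mp hyc'
      linarith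
    have hpre : IsPreconnected (γ '' Ici T) :=
      isPreconnected_Ici.image γ (hγcont.mono (fun s hs => le_trans hT0 hs))
    have hcover : γ '' Ici T ⊆ ball c ε ∪ v := by
      rintro y ⟨t, ht, rfl⟩
      have := hT t ht
      rw [mem_iUnion₂] at this
      obtain ⟨c'', hc'', hyc''⟩ := this
      by_cases hcc : c'' = c
      · exact Or.inl (by rwa [hcc] at hyc'')
      · exact Or.inr (mem_biUnion ⟨hc'', hcc⟩ hyc'')
    have hsub : γ '' Ici T ⊆ ball c ε :=
      hpre.subset_left_of_subset_union isOpen_ball hvopen hdisj hcover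
        ⟨γ T, mem_image_of_mem γ self_mem_Ici, hcball⟩
    rw [eventually_atTop]
    exact ⟨T, fun t ht => hsub (mem_image_of_mem γ ht)⟩
  obtain ⟨c₀, hc₀Z, hev₀⟩ := key (δ / 2) (by linarith) (by linarith)
  refine ⟨c₀, hc₀Z.2, ?_⟩
  rw [Metric.tendsto_nhds]
  intro ε hε
  set ε' : ℝ := min ε (δ / 2) with hε'def
  have hε'0 : 0 < ε' := lt_min hε (by linarith)
  have hε'δ : 2 * ε' ≤ δ := by
    have := min_le_right ε (δ / 2)
    have h2 : ε' ≤ δ / 2 := this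
    linarith
  obtain ⟨c, hcZ, hev⟩ := key ε' hε'0 hε'δ
  have hcc₀ : c = c₀ := by
    obtain ⟨t, h1, h2⟩ := (hev.and hev₀).exists
    by_contra hne
    have hd := hsep c hcZ c₀ hc₀Z hne
    have ht1 : dist (γ t) c < ε' := mem_ball.mp h1
    have ht2 : dist (γ t) c₀ < δ / 2 := mem_ball.mp h2
    have htri : dist c c₀ ≤ dist c (γ t) + dist (γ t) c₀ := dist_triangle _ _ _
    rw [dist_comm c (γ t)] at htri
    have : ε' ≤ δ / 2 := min_le_right _ _
    linarith
  rw [hcc₀] at hev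
  filter_upwards [hev] with t ht
  exact lt_of_lt_of_le (mem_ball.mp ht) (min_le_left _ _)

end Conv

/-- Existence, uniqueness (on `[0,∞)`) and convergence to a critical point
of the gradient ascent line starting at any point `x`. -/
theorem gradient_flow_exists_unique_and_converges
    {d : ℕ} (hd : 0 < d) (f : Euc d → ℝ) (hf : IsNiceDensity f) (x : Euc d) :
    ∃ γ : ℝ → Euc d, IsGradFlow f x γ ∧
      (∀ γ' : ℝ → Euc d, IsGradFlow f x γ' → EqOn γ γ' (Ici 0)) ∧
      ∃ xlim : Euc d, gradient f xlim = 0 ∧ Tendsto γ atTop (𝓝 xlim) := by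
  obtain ⟨hnonneg, _hint, htend, hdiff, hdg, ⟨B, hB⟩, ⟨M, hM⟩, ⟨M2, hM2⟩, _hucf, _hucg,
    huch, hmorse⟩ := hf
  have hc2 : Continuous (hess f) := huch.continuous
  set L : NNReal := Real.toNNReal M2 with hLdef
  have hLip : LipschitzWith L (gradient f) := by
    refine lipschitzWith_of_nnnorm_fderiv_le hdg (fun y => ?_)
    have h1 : ‖fderiv ℝ (gradient f) y‖ ≤ M2 := hM2 y
    rw [← norm_toNNReal]
    exact Real.toNNReal_le_toNNReal h1
  obtain ⟨γ, hγ0, hγflow⟩ := exists_global_flow (gradient f) L hLip M hM x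
  refine ⟨γ, ⟨hγ0, hγflow⟩, ?_, ?_⟩
  · intro γ' hγ'
    exact flow_unique (gradient f) L hLip hγflow hγ'.2 (by rw [hγ0, hγ'.1])
  · by_cases hpos : 0 < f (γ 0)
    · exact flow_converges hdiff hdg hc2 htend hLip hM hB hmorse hγflow hpos
    · -- `x` is a global minimum, hence a critical point, and the flow is constant
      have hfx0 : f x = 0 := by
        rw [hγ0] at hpos
        exact le_antisymm (not_lt.mp hpos) (hnonneg x)
      have hmin : IsLocalMin f x :=
        Filter.Eventually.of_forall (fun y => by rw [hfx0]; exact hnonneg y)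
      have hfd : fderiv ℝ f x = 0 := hmin.fderiv_eq_zero
      have hgx : gradient f x = 0 := by
        have h1 : gradient f x = (InnerProductSpace.toDual ℝ (Euc d)).symm (fderiv ℝ f x) := rfl
        rw [h1, hfd, map_zero]
      have hconst : ∀ t ∈ Ici (0:ℝ),
          HasDerivWithinAt (fun _ : ℝ => x) (gradient f ((fun _ : ℝ => x) t)) (Ici 0) t := by
        intro t ht
        simp only [hgx]
        exact hasDerivWithinAt_const t _ x
      have heq : EqOn γ (fun _ => x) (Ici 0) :=
        flow_unique (gradient f) L hLip hγflow hconst (by rw [hγ0])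
      refine ⟨x, hgx, ?_⟩
      have : Tendsto (fun _ : ℝ => x) atTop (𝓝 x) := tendsto_const_nhds
      refine this.congr' ?_
      filter_upwards [eventually_ge_atTop (0:ℝ)] with t ht
      exact (heq ht).symm
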